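/- Let Λ be a countably infinite set, 1 < p ≤ ∞, and let B_p = ℓ_p(Λ) if p < ∞ and B_∞ = c_0(Λ). Let (c_α)_{α∈Λ} be a sequence of complex numbers. Then 0 belongs to the weak closure of the set {c_α · e_α : α ∈ Λ} in B_p if and only if ∑_{α∈Λ} |c_α|^{-q} = ∞, where 1/p + 1/q = 1 (with the convention that terms with c_α = 0 contribute ∞ to the sum). -/

import Mathlib

open Filter Topology
open scoped ENNReal NNReal ZeroAtInfty

set_option linter.unusedSectionVars false
set_option maxHeartbeats 1000000

section WeakClosureAux

theorem zero_mem_closure_weakSpace_iff {E : Type*} [AddCommGroup E] [Module ℂ E]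
    [TopologicalSpace E] (S : Set (WeakSpace ℂ E)) :
    (0 : WeakSpace ℂ E) ∈ closure S ↔
      ∀ (I : Finset (E →L[ℂ] ℂ)) (ε : ℝ), 0 < ε →
        ∃ w ∈ S, ∀ F ∈ I, ‖(topDualPairing ℂ E).flip w F‖ < ε := by
  set B := (topDualPairing ℂ E).flip with hB
  have hB0 : ∀ F : E →L[ℂ] ℂ, B (0 : WeakSpace ℂ E) F = 0 := fun F => map_zero F
  constructor
  · intro h I ε hε
    have hU : IsOpen {w : WeakSpace ℂ E | ∀ F ∈ I, ‖B w F‖ < ε} := by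
      have heq : {w : WeakSpace ℂ E | ∀ F ∈ I, ‖B w F‖ < ε}
          = ⋂ F ∈ I, {w : WeakSpace ℂ E | ‖B w F‖ < ε} := by
        ext w; simp
      rw [heq]
      refine isOpen_biInter_finset fun F _ => ?_
      exact isOpen_lt ((WeakBilin.eval_continuous B F).norm) continuous_const
    have h0 : (0 : WeakSpace ℂ E) ∈ {w : WeakSpace ℂ E | ∀ F ∈ I, ‖B w F‖ < ε} := by
      intro F _; rw [hB0 F]; simpa using hε
    obtain ⟨w, hw1, hw2⟩ := (mem_closure_iff.mp h) _ hU h0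
    exact ⟨w, hw2, hw1⟩
  · intro h
    rw [mem_closure_iff_nhds]
    intro U hU
    have hnhds : 𝓝 (0 : WeakSpace ℂ E)
        = comap (fun (w : WeakSpace ℂ E) (F : E →L[ℂ] ℂ) => B w F)
            (𝓝 (fun F : E →L[ℂ] ℂ => B (0 : WeakSpace ℂ E) F)) :=
      nhds_induced _ _
    rw [hnhds, mem_comap] at hU
    obtain ⟨t, ht, hsub⟩ := hU
    rw [nhds_pi] at ht
    obtain ⟨I, hIfin, V, hV, hVsub⟩ := Filter.mem_pi.mp ht
    choose εf hεf hball using fun F => Metric.mem_nhds_iff.mp (hV F)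
    rcases hIfin.toFinset.eq_empty_or_nonempty with hJ | hJ
    · obtain ⟨w, hwS, -⟩ := h ∅ 1 one_pos
      refine ⟨w, hsub ?_, hwS⟩
      refine hVsub fun F hF => ?_
      exact absurd (hIfin.mem_toFinset.mpr hF) (by simp [hJ])
    · set ε₀ := hIfin.toFinset.inf' hJ εf with hε₀def
      have hε₀ : 0 < ε₀ := (Finset.lt_inf'_iff hJ).mpr fun F _ => hεf F
      obtain ⟨w, hwS, hw⟩ := h hIfin.toFinset ε₀ hε₀
      refine ⟨w, hsub (hVsub fun F hF => ?_), hwS⟩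
      have hF' : F ∈ hIfin.toFinset := hIfin.mem_toFinset.mpr hF
      apply hball F
      rw [Metric.mem_ball, dist_eq_norm, hB0 F, sub_zero]
      exact lt_of_lt_of_le (hw F hF') (Finset.inf'_le _ hF')


theorem core_iff {Λ : Type*} {E : Type*} [NormedAddCommGroup E] [NormedSpace ℂ E]
    (e : Λ → E) (c : Λ → ℂ) (q : ℝ) (hq : 0 < q)
    (H1 : ∀ F : E →L[ℂ] ℂ, ∑' α, (‖F (e α)‖₊ : ℝ≥0∞) ^ q ≠ ⊤)
    (H2 : ∑' α, ((‖c α‖₊ : ℝ≥0∞)⁻¹) ^ q ≠ ⊤ → ∃ F : E →L[ℂ] ℂ, ∀ α, F (c α • e α) = 1) :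
    ((0 : WeakSpace ℂ E) ∈ closure {v : WeakSpace ℂ E | ∃ α, v = toWeakSpace ℂ E (c α • e α)} ↔
      ∑' α, ((‖c α‖₊ : ℝ≥0∞)⁻¹) ^ q = ⊤) := by
  rw [zero_mem_closure_weakSpace_iff]
  have hBapp : ∀ (x : E) (F : E →L[ℂ] ℂ),
      (topDualPairing ℂ E).flip (toWeakSpace ℂ E x) F = F x := fun x F => rfl
  constructor
  · intro hcl
    by_contra hne
    obtain ⟨F, hF⟩ := H2 hne
    obtain ⟨w, ⟨α, rfl⟩, hw⟩ := hcl {F} 1 one_pos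
    have := hw F (Finset.mem_singleton_self F)
    rw [hBapp, hF α] at this
    simp at this
  · intro htop I ε hε
    by_contra hcon
    push_neg at hcon
    have hεnn : ε.toNNReal ≠ 0 := (Real.toNNReal_pos.mpr hε).ne'
    have key : ∀ α : Λ, ((‖c α‖₊ : ℝ≥0∞)⁻¹) ^ q ≤
        ((ε.toNNReal : ℝ≥0∞)⁻¹) ^ q * ∑ F ∈ I, (‖F (e α)‖₊ : ℝ≥0∞) ^ q := by
      intro α
      obtain ⟨F, hFI, hFε⟩ := hcon (toWeakSpace ℂ E (c α • e α)) ⟨α, rfl⟩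
      rw [hBapp] at hFε
      have hR : ε ≤ ‖c α‖ * ‖F (e α)‖ := by
        rw [map_smul] at hFε
        simpa [norm_smul] using hFε
      have hc0 : c α ≠ 0 := fun h0 => by rw [h0, norm_zero, zero_mul] at hR; linarith
      have hF0 : F (e α) ≠ 0 := fun h0 => by rw [h0, norm_zero, mul_zero] at hR; linarith
      have ha0 : ‖c α‖₊ ≠ 0 := nnnorm_ne_zero_iff.mpr hc0
      have hnn : ‖c α‖₊⁻¹ ≤ ε.toNNReal⁻¹ * ‖F (e α)‖₊ := by
        rw [← NNReal.coe_le_coe]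
        push_cast
        rw [Real.coe_toNNReal ε hε.le]
        have hapos : (0:ℝ) < ‖c α‖ := norm_pos_iff.mpr hc0
        rw [inv_eq_one_div, (div_eq_inv_mul ‖F (e α)‖ ε).symm, div_le_div_iff₀ hapos hε]
        nlinarith [hR]
      have hbase : (↑‖c α‖₊ : ℝ≥0∞)⁻¹ ≤ (↑ε.toNNReal : ℝ≥0∞)⁻¹ * ↑‖F (e α)‖₊ := by
        calc (↑‖c α‖₊ : ℝ≥0∞)⁻¹ = ↑(‖c α‖₊⁻¹) := (ENNReal.coe_inv ha0).symm
        _ ≤ ↑(ε.toNNReal⁻¹ * ‖F (e α)‖₊) := ENNReal.coe_le_coe.mpr hnn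
        _ = (↑ε.toNNReal : ℝ≥0∞)⁻¹ * ↑‖F (e α)‖₊ := by
            rw [ENNReal.coe_mul, ENNReal.coe_inv hεnn]
      calc ((‖c α‖₊ : ℝ≥0∞))⁻¹ ^ q ≤ ((↑ε.toNNReal : ℝ≥0∞)⁻¹ * ↑‖F (e α)‖₊) ^ q :=
            ENNReal.rpow_le_rpow hbase hq.le
      _ = ((ε.toNNReal : ℝ≥0∞))⁻¹ ^ q * (‖F (e α)‖₊ : ℝ≥0∞) ^ q :=
            ENNReal.mul_rpow_of_nonneg _ _ hq.le
      _ ≤ ((ε.toNNReal : ℝ≥0∞))⁻¹ ^ q * ∑ F ∈ I, (‖F (e α)‖₊ : ℝ≥0∞) ^ q := by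
            gcongr
            exact Finset.single_le_sum (f := fun G => (‖G (e α)‖₊ : ℝ≥0∞) ^ q)
              (fun G _ => zero_le) hFI
    have hle : (⊤ : ℝ≥0∞) ≤ ((ε.toNNReal : ℝ≥0∞))⁻¹ ^ q
        * ∑ F ∈ I, ∑' α, (‖F (e α)‖₊ : ℝ≥0∞) ^ q := by
      calc (⊤ : ℝ≥0∞) = ∑' α, ((‖c α‖₊ : ℝ≥0∞)⁻¹) ^ q := htop.symm
      _ ≤ ∑' α, (((ε.toNNReal : ℝ≥0∞))⁻¹ ^ q * ∑ F ∈ I, (‖F (e α)‖₊ : ℝ≥0∞) ^ q) :=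
            ENNReal.tsum_le_tsum key
      _ = ((ε.toNNReal : ℝ≥0∞))⁻¹ ^ q * ∑' α, ∑ F ∈ I, (‖F (e α)‖₊ : ℝ≥0∞) ^ q :=
            ENNReal.tsum_mul_left
      _ = _ := by rw [Summable.tsum_finsetSum fun F _ => ENNReal.summable]
    have hfin : ((ε.toNNReal : ℝ≥0∞))⁻¹ ^ q
        * ∑ F ∈ I, ∑' α, (‖F (e α)‖₊ : ℝ≥0∞) ^ q ≠ ⊤ := by
      apply ENNReal.mul_ne_top
      · exact ENNReal.rpow_ne_top_of_nonneg hq.le (ENNReal.inv_ne_top.mpr (by simpa using hεnn))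
      · exact (ENNReal.sum_lt_top.mpr fun F _ => lt_top_iff_ne_top.mpr (H1 F)).ne
    exact hfin (top_le_iff.mp hle)

theorem lp_dual_single_tsum_ne_top {Λ : Type*} [DecidableEq Λ] (p : ℝ≥0∞) [Fact (1 ≤ p)]
    {q : ℝ} (hpq : Real.HolderConjugate p.toReal q)
    (F : lp (fun _ : Λ => ℂ) p →L[ℂ] ℂ) :
    ∑' α : Λ, (‖F (lp.single p α 1)‖₊ : ℝ≥0∞) ^ q ≠ ⊤ := by
  set g : Λ → ℂ := fun α => F (lp.single p α 1) with hg
  have hp0 : p.toReal ≠ 0 := hpq.pos.ne'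
  have hq1 : 1 < q := hpq.symm.lt
  have hq0 : 0 < q := hpq.symm.pos
  have hqp : (q - 1) * p.toReal = q := by
    have h := hpq.inv_add_inv_eq_one
    have hq0' : q ≠ 0 := hq0.ne'
    field_simp at h
    nlinarith [h]
  -- finite-sum bound
  have key : ∀ S : Finset Λ, ∑ α ∈ S, ‖g α‖ ^ q ≤ ‖F‖ ^ q := by
    intro S
    set X : ℝ := ∑ α ∈ S, ‖g α‖ ^ q with hX
    have hX0 : 0 ≤ X :=
      Finset.sum_nonneg fun α _ => Real.rpow_nonneg (norm_nonneg _) _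
    set h : Λ → ℂ := fun α => (starRingEnd ℂ) (g α) * ((‖g α‖ ^ (q - 2) : ℝ) : ℂ) with hh
    have hnorm_h : ∀ α, ‖h α‖ = ‖g α‖ ^ (q - 1) := by
      intro α
      by_cases hgz : g α = 0
      · simp [hh, hgz]
        exact (Real.zero_rpow (by linarith)).symm
      · have hpos : 0 < ‖g α‖ := norm_pos_iff.mpr hgz
        rw [hh]
        simp only [norm_mul, RCLike.norm_conj, Complex.norm_real, Real.norm_eq_abs]
        rw [abs_of_nonneg (Real.rpow_nonneg (norm_nonneg _) _)]
        nth_rewrite 1 [← Real.rpow_one ‖g α‖]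
        rw [← Real.rpow_add hpos]
        congr 1
        ring
    have hmul : ∀ α, h α * g α = ((‖g α‖ ^ q : ℝ) : ℂ) := by
      intro α
      by_cases hgz : g α = 0
      · simp [hh, hgz, Real.zero_rpow hq0.ne']
      · have hpos : 0 < ‖g α‖ := norm_pos_iff.mpr hgz
        rw [hh]
        have : (starRingEnd ℂ) (g α) * ((‖g α‖ ^ (q - 2) : ℝ) : ℂ) * g α
            = ((‖g α‖ ^ (2:ℕ) : ℝ) : ℂ) * ((‖g α‖ ^ (q - 2) : ℝ) : ℂ) := by
          rw [mul_comm ((starRingEnd ℂ) (g α)), mul_assoc, Complex.conj_mul']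
          push_cast
          ring
        rw [this, ← Complex.ofReal_mul]
        congr 1
        rw [← Real.rpow_natCast ‖g α‖ 2, ← Real.rpow_add hpos]
        congr 1
        ring
    set v : lp (fun _ : Λ => ℂ) p := ∑ α ∈ S, lp.single p α (h α) with hv
    have hvnorm : ‖v‖ ^ p.toReal = X := by
      rw [hv, lp.norm_sum_single hpq.pos, hX]
      refine Finset.sum_congr rfl fun α _ => ?_
      rw [hnorm_h α, ← Real.rpow_mul (norm_nonneg _), hqp]
    have hFv : F v = ((X : ℝ) : ℂ) := by
      rw [hv, map_sum, hX]
      push_cast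
      refine Finset.sum_congr rfl fun α _ => ?_
      have h1 : lp.single p α (h α) = h α • (lp.single p α 1 : lp (fun _ : Λ => ℂ) p) := by
        rw [← lp.single_smul, smul_eq_mul, mul_one]
      rw [h1, map_smul]
      simp only [smul_eq_mul]
      exact hmul α
    have hXnorm : X = ‖F v‖ := by rw [hFv]; simp [abs_of_nonneg hX0]
    rcases eq_or_lt_of_le hX0 with h0 | hXpos
    · rw [← h0]; positivity
    · have hvX : ‖v‖ = X ^ (1 / p.toReal) := by
        rw [← hvnorm, one_div]
        exact (Real.rpow_rpow_inv (norm_nonneg v) hp0).symm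
      have hXle : X ≤ ‖F‖ * X ^ (1 / p.toReal) := by
        calc X = ‖F v‖ := hXnorm
        _ ≤ ‖F‖ * ‖v‖ := F.le_opNorm v
        _ = ‖F‖ * X ^ (1 / p.toReal) := by rw [hvX]
      have h2 : X ^ (1 / q) ≤ ‖F‖ := by
        have hpow : X ^ (1 / q) = X / X ^ (1 / p.toReal) := by
          have : (1:ℝ) / q = 1 - 1 / p.toReal := by
            have := hpq.inv_add_inv_eq_one
            rw [one_div, one_div]
            linarith
          rw [this, Real.rpow_sub hXpos, Real.rpow_one]
        rw [hpow, div_le_iff₀ (Real.rpow_pos_of_pos hXpos _)]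
        linarith [hXle]
      calc X = (X ^ (1/q)) ^ q := by
            rw [← Real.rpow_mul hX0, one_div_mul_cancel hq0.ne', Real.rpow_one]
      _ ≤ ‖F‖ ^ q := Real.rpow_le_rpow (Real.rpow_nonneg hX0 _) h2 hq0.le
  -- conclude
  have hcoe : ∀ α, (‖g α‖₊ : ℝ≥0∞) ^ q = ((‖g α‖₊ ^ q : ℝ≥0) : ℝ≥0∞) := fun α =>
    (ENNReal.coe_rpow_of_nonneg _ hq0.le).symm
  show ∑' α : Λ, (‖g α‖₊ : ℝ≥0∞) ^ q ≠ ⊤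
  have hle : ∑' α : Λ, (‖g α‖₊ : ℝ≥0∞) ^ q ≤ ((‖F‖₊ ^ q : ℝ≥0) : ℝ≥0∞) := by
    simp_rw [hcoe]
    rw [ENNReal.tsum_eq_iSup_sum]
    refine iSup_le fun S => ?_
    rw [← ENNReal.coe_finset_sum, ENNReal.coe_le_coe, ← NNReal.coe_le_coe]
    push_cast [NNReal.coe_rpow, coe_nnnorm]
    exact key S
  exact (lt_of_le_of_lt hle (ENNReal.coe_lt_top)).ne

theorem lp_pairing_exists {Λ : Type*} (p q' : ℝ≥0∞) [Fact (1 ≤ p)] [Fact (1 ≤ q')]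
    (hpq : Real.HolderConjugate p.toReal q'.toReal)
    (f : lp (fun _ : Λ => ℂ) q') :
    ∃ F : lp (fun _ : Λ => ℂ) p →L[ℂ] ℂ, ∀ v, F v = ∑' α, f α * v α := by
  have hsum : ∀ v : lp (fun _ : Λ => ℂ) p, Summable fun α => f α * v α := by
    intro v
    have h1 := lp.summable_mul hpq.symm f v
    refine Summable.of_norm ?_
    simpa [norm_mul] using h1
  set L : lp (fun _ : Λ => ℂ) p →ₗ[ℂ] ℂ :=
    { toFun := fun v => ∑' α, f α * v α
      map_add' := by
        intro v w
        show ∑' α, f α * (v + w) α = (∑' α, f α * v α) + ∑' α, f α * w α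
        have : (fun α => f α * (v + w) α) = fun α => f α * v α + f α * w α := by
          ext α
          simp [lp.coeFn_add, mul_add]
        rw [this]
        exact Summable.tsum_add (hsum v) (hsum w)
      map_smul' := by
        intro a v
        show ∑' α, f α * (a • v) α = a • ∑' α, f α * v α
        have : (fun α => f α * (a • v) α) = fun α => a * (f α * v α) := by
          ext α
          simp [lp.coeFn_smul, Pi.smul_apply, smul_eq_mul]
          ring
        rw [this, tsum_mul_left]
        rfl } with hL
  refine ⟨L.mkContinuous ‖f‖ ?_, fun v => rfl⟩
  intro v
  have h2 : ‖∑' α, f α * v α‖ ≤ ∑' α, ‖f α‖ * ‖v α‖ := by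
    have h3 := norm_tsum_le_tsum_norm (f := fun α => f α * v α) (by
      simpa [norm_mul] using lp.summable_mul hpq.symm f v)
    simpa [norm_mul] using h3
  exact h2.trans (lp.tsum_mul_le_mul_norm' hpq.symm f v)

variable {Λ : Type*} [TopologicalSpace Λ] [DiscreteTopology Λ] [DecidableEq Λ]

/-- indicator function in c₀ -/
def c0single (α : Λ) (z : ℂ) : C₀(Λ, ℂ) where
  toFun := fun β => if β = α then z else 0
  continuous_toFun := continuous_of_discreteTopology
  zero_at_infty' := by
    rw [cocompact_eq_cofinite]
    have hev : (fun β : Λ => if β = α then z else 0) =ᶠ[cofinite] fun _ => 0 := by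
      have := (Set.finite_singleton α).eventually_cofinite_notMem
      filter_upwards [this] with β hβ
      simp only [Set.mem_singleton_iff] at hβ
      rw [if_neg hβ]
    exact (tendsto_congr' hev).mpr tendsto_const_nhds

@[simp] theorem c0single_apply (α β : Λ) (z : ℂ) :
    c0single α z β = if β = α then z else 0 := rfl

theorem c0_norm_apply_le (v : C₀(Λ, ℂ)) (β : Λ) : ‖v β‖ ≤ ‖v‖ := by
  rw [← ZeroAtInftyContinuousMap.norm_toBCF_eq_norm]
  exact BoundedContinuousFunction.norm_coe_le_norm v.toBCF β

theorem c0_norm_le (v : C₀(Λ, ℂ)) {C : ℝ} (hC : 0 ≤ C) (h : ∀ β, ‖v β‖ ≤ C) : ‖v‖ ≤ C := by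
  rw [← ZeroAtInftyContinuousMap.norm_toBCF_eq_norm]
  exact (BoundedContinuousFunction.norm_le hC).mpr h

theorem c0_pairing_exists (f : Λ → ℂ) (hf : Summable fun α => ‖f α‖) :
    ∃ F : C₀(Λ, ℂ) →L[ℂ] ℂ, ∀ v, F v = ∑' α, f α * v α := by
  have hsum : ∀ v : C₀(Λ, ℂ), Summable fun α => f α * v α := by
    intro v
    refine Summable.of_norm ?_
    refine Summable.of_nonneg_of_le (fun α => norm_nonneg _) (fun α => ?_) (hf.mul_right ‖v‖)
    rw [norm_mul]
    exact mul_le_mul_of_nonneg_left (c0_norm_apply_le v α) (norm_nonneg _)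
  set L : C₀(Λ, ℂ) →ₗ[ℂ] ℂ :=
    { toFun := fun v => ∑' α, f α * v α
      map_add' := by
        intro v w
        show ∑' α, f α * (v + w) α = (∑' α, f α * v α) + ∑' α, f α * w α
        have : (fun α => f α * (v + w) α) = fun α => f α * v α + f α * w α := by
          ext α
          simp [mul_add]
        rw [this]
        exact Summable.tsum_add (hsum v) (hsum w)
      map_smul' := by
        intro a v
        show ∑' α, f α * (a • v) α = a • ∑' α, f α * v α
        have : (fun α => f α * (a • v) α) = fun α => a * (f α * v α) := by
          ext α
          simp
          ring
        rw [this, tsum_mul_left]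
        rfl } with hL
  refine ⟨L.mkContinuous (∑' α, ‖f α‖) ?_, fun v => rfl⟩
  intro v
  have h2 : ‖∑' α, f α * v α‖ ≤ ∑' α, ‖f α‖ * ‖v α‖ := by
    have h3 := norm_tsum_le_tsum_norm (f := fun α => f α * v α) (by
      refine Summable.of_nonneg_of_le (fun α => norm_nonneg _) (fun α => ?_) (hf.mul_right ‖v‖)
      rw [norm_mul]
      exact mul_le_mul_of_nonneg_left (c0_norm_apply_le v α) (norm_nonneg _))
    simpa [norm_mul] using h3
  refine h2.trans ?_
  calc ∑' α, ‖f α‖ * ‖v α‖ ≤ ∑' α, ‖f α‖ * ‖v‖ := by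
        refine Summable.tsum_le_tsum (fun α => ?_) ?_ (hf.mul_right ‖v‖)
        · exact mul_le_mul_of_nonneg_left (c0_norm_apply_le v α) (norm_nonneg _)
        · refine Summable.of_nonneg_of_le (fun α => by positivity) (fun α => ?_) (hf.mul_right ‖v‖)
          exact mul_le_mul_of_nonneg_left (c0_norm_apply_le v α) (norm_nonneg _)
  _ = (∑' α, ‖f α‖) * ‖v‖ := tsum_mul_right

theorem c0_dual_single_tsum_ne_top (F : C₀(Λ, ℂ) →L[ℂ] ℂ) :
    ∑' α : Λ, (‖F (c0single α 1)‖₊ : ℝ≥0∞) ≠ ⊤ := by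
  set g : Λ → ℂ := fun α => F (c0single α 1) with hg
  have key : ∀ S : Finset Λ, ∑ α ∈ S, ‖g α‖ ≤ ‖F‖ := by
    intro S
    set h : Λ → ℂ := fun α => if g α = 0 then 0 else (starRingEnd ℂ) (g α) * ((‖g α‖ : ℝ) : ℂ)⁻¹
      with hh
    have hnorm_h : ∀ α, ‖h α‖ ≤ 1 := by
      intro α
      by_cases hz : g α = 0
      · simp [hh, hz]
      · have hpos : 0 < ‖g α‖ := norm_pos_iff.mpr hz
        rw [hh]
        simp only [if_neg hz, norm_mul, RCLike.norm_conj, norm_inv, Complex.norm_real,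
          Real.norm_eq_abs, abs_of_pos hpos]
        rw [mul_inv_cancel₀ hpos.ne']
    have hmul : ∀ α, h α * g α = ((‖g α‖ : ℝ) : ℂ) := by
      intro α
      by_cases hz : g α = 0
      · simp [hh, hz]
      · have hpos : 0 < ‖g α‖ := norm_pos_iff.mpr hz
        rw [hh]
        dsimp only
        rw [if_neg hz, mul_comm ((starRingEnd ℂ) (g α)), mul_assoc, Complex.conj_mul']
        norm_cast
        rw [sq, ← mul_assoc, inv_mul_cancel₀ hpos.ne', one_mul]
    set v : C₀(Λ, ℂ) := ∑ α ∈ S, h α • c0single α 1 with hv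
    have hv_apply : ∀ β, v β = if β ∈ S then h β else 0 := by
      intro β
      rw [hv]
      have : (∑ α ∈ S, h α • c0single α 1) β = ∑ α ∈ S, (h α • c0single α 1) β := by
        let ev : C₀(Λ, ℂ) →+ ℂ :=
          { toFun := fun w => w β, map_zero' := rfl, map_add' := fun a b => rfl }
        exact map_sum ev _ S
      rw [this]
      by_cases hβ : β ∈ S
      · rw [if_pos hβ, Finset.sum_eq_single β]
        · simp
        · intro γ hγ hne
          simp [Ne.symm hne]
        · intro hcon; exact absurd hβ hcon
      · rw [if_neg hβ]
        refine Finset.sum_eq_zero fun γ hγ => ?_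
        have hβγ : β ≠ γ := fun hEq => hβ (hEq ▸ hγ)
        simp [hβγ]
    have hvnorm : ‖v‖ ≤ 1 := by
      refine c0_norm_le v zero_le_one fun β => ?_
      rw [hv_apply β]
      by_cases hβ : β ∈ S
      · rw [if_pos hβ]; exact hnorm_h β
      · rw [if_neg hβ]; simp
    have hFv : F v = ((∑ α ∈ S, ‖g α‖ : ℝ) : ℂ) := by
      rw [hv, map_sum]
      push_cast
      refine Finset.sum_congr rfl fun α _ => ?_
      rw [map_smul]
      simp only [smul_eq_mul]
      exact hmul α
    calc ∑ α ∈ S, ‖g α‖ = ‖F v‖ := by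
          rw [hFv]
          simp only [Complex.norm_real, Real.norm_eq_abs]
          rw [abs_of_nonneg (Finset.sum_nonneg fun α _ => norm_nonneg _)]
    _ ≤ ‖F‖ * ‖v‖ := F.le_opNorm v
    _ ≤ ‖F‖ * 1 := by
          apply mul_le_mul_of_nonneg_left hvnorm (norm_nonneg F)
    _ = ‖F‖ := mul_one _
  show ∑' α : Λ, (‖g α‖₊ : ℝ≥0∞) ≠ ⊤
  have hle : ∑' α : Λ, (‖g α‖₊ : ℝ≥0∞) ≤ (‖F‖₊ : ℝ≥0∞) := by
    rw [ENNReal.tsum_eq_iSup_sum]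
    refine iSup_le fun S => ?_
    rw [← ENNReal.coe_finset_sum, ENNReal.coe_le_coe, ← NNReal.coe_le_coe]
    push_cast [coe_nnnorm]
    exact key S
  exact (lt_of_le_of_lt hle ENNReal.coe_lt_top).ne

section Clause1
variable {Λ : Type*} [DecidableEq Λ]

theorem clause1 (c : Λ → ℂ) (q : ℝ) (p : ℝ≥0∞) (hp1 : 1 < p) (hpt : p ≠ ⊤) [Fact (1 ≤ p)]
    (hq : 1 / p.toReal + 1 / q = 1) :
    ((0 : WeakSpace ℂ (lp (fun _ : Λ => ℂ) p)) ∈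
        closure {v : WeakSpace ℂ (lp (fun _ : Λ => ℂ) p) |
          ∃ α : Λ, v = toWeakSpace ℂ _ (c α • lp.single p α 1)} ↔
      ∑' α : Λ, ((‖c α‖₊ : ℝ≥0∞)⁻¹) ^ q = ⊤) := by
  have hptR : 1 < p.toReal := by
    have := (ENNReal.toReal_lt_toReal ENNReal.one_ne_top hpt).mpr hp1
    simpa using this
  have hpq : Real.HolderConjugate p.toReal q :=
    Real.holderConjugate_iff.mpr ⟨hptR, by rw [inv_eq_one_div, inv_eq_one_div]; exact hq⟩
  have hq0 : 0 < q := hpq.symm.pos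
  refine core_iff (fun α => lp.single p α 1) c q hq0
    (fun F => lp_dual_single_tsum_ne_top p hpq F) ?_
  intro hne
  have hc : ∀ α, c α ≠ 0 := by
    intro α h0
    apply hne
    have hterm : ((‖c α‖₊ : ℝ≥0∞)⁻¹) ^ q = ⊤ := by
      rw [h0]
      simp [ENNReal.top_rpow_of_pos hq0]
    have hle := ENNReal.le_tsum (f := fun α => ((‖c α‖₊ : ℝ≥0∞)⁻¹) ^ q) α
    rw [hterm] at hle
    exact top_le_iff.mp hle
  have hcoe : ∀ α, ((‖c α‖₊ : ℝ≥0∞)⁻¹) ^ q = ((‖c α‖₊⁻¹ ^ q : ℝ≥0) : ℝ≥0∞) := by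
    intro α
    rw [← ENNReal.coe_inv (nnnorm_ne_zero_iff.mpr (hc α))]
    exact (ENNReal.coe_rpow_of_nonneg _ hq0.le).symm
  have hsummable : Summable (fun α => ‖c α‖₊⁻¹ ^ q) := by
    rw [← ENNReal.tsum_coe_ne_top_iff_summable]
    simpa [hcoe] using hne
  set q' := ENNReal.ofReal q with hq'
  haveI : Fact (1 ≤ q') := ⟨ENNReal.one_le_ofReal.mpr hpq.symm.lt.le⟩
  have hq'toReal : q'.toReal = q := ENNReal.toReal_ofReal hq0.le
  have hmem : Memℓp (fun α => (c α)⁻¹) q' := by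
    apply memℓp_gen
    rw [hq'toReal]
    have := NNReal.summable_coe.mpr hsummable
    refine this.congr fun α => ?_
    push_cast [NNReal.coe_rpow, coe_nnnorm]
    rw [norm_inv]
  obtain ⟨F, hF⟩ := lp_pairing_exists p q' (by rw [hq'toReal]; exact hpq)
    ⟨fun α => (c α)⁻¹, hmem⟩
  refine ⟨F, fun α => ?_⟩
  rw [hF]
  rw [tsum_eq_single α ?_]
  · have h1 : (c α • lp.single p α 1 : lp (fun _ : Λ => ℂ) p) α = c α * 1 := by
      rw [lp.coeFn_smul, Pi.smul_apply, lp.single_apply_self, smul_eq_mul]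
    have h2 : ((⟨fun α => (c α)⁻¹, hmem⟩ : lp (fun _ : Λ => ℂ) q') : ∀ _ : Λ, ℂ) α
        = (c α)⁻¹ := rfl
    rw [h1, h2, mul_one, inv_mul_cancel₀ (hc α)]
  · intro β hβ
    have h3 : (c α • lp.single p α 1 : lp (fun _ : Λ => ℂ) p) β = 0 := by
      rw [lp.coeFn_smul, Pi.smul_apply, lp.single_apply_ne p α _ hβ, smul_zero]
    rw [h3, mul_zero]

end Clause1

section Clause2

variable {Λ : Type*} [TopologicalSpace Λ] [DiscreteTopology Λ] [DecidableEq Λ]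

theorem clause2 (c : Λ → ℂ) :
    ((0 : WeakSpace ℂ C₀(Λ, ℂ)) ∈
        closure {v : WeakSpace ℂ C₀(Λ, ℂ) | ∃ (α : Λ) (g : C₀(Λ, ℂ)),
          v = toWeakSpace ℂ _ g ∧ g α = c α ∧ ∀ β ≠ α, g β = 0} ↔
      ∑' α : Λ, ((‖c α‖₊ : ℝ≥0∞)⁻¹) ^ (1:ℝ) = ⊤) := by
  have hset : {v : WeakSpace ℂ C₀(Λ, ℂ) | ∃ (α : Λ) (g : C₀(Λ, ℂ)),
          v = toWeakSpace ℂ _ g ∧ g α = c α ∧ ∀ β ≠ α, g β = 0}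
      = {v : WeakSpace ℂ C₀(Λ, ℂ) |
          ∃ α : Λ, v = toWeakSpace ℂ C₀(Λ, ℂ) (c α • c0single α 1)} := by
    ext v
    constructor
    · rintro ⟨α, g, hv, hgα, hg0⟩
      refine ⟨α, ?_⟩
      have hgeq : g = c α • c0single α 1 := by
        ext β
        rw [ZeroAtInftyContinuousMap.smul_apply, c0single_apply]
        by_cases hβ : β = α
        · subst hβ; simp [hgα]
        · simp [hg0 β hβ, hβ]
      rw [hv, hgeq]
    · rintro ⟨α, rfl⟩
      refine ⟨α, c α • c0single α 1, rfl, ?_, fun β hβ => ?_⟩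
      · rw [ZeroAtInftyContinuousMap.smul_apply, c0single_apply]
        simp
      · rw [ZeroAtInftyContinuousMap.smul_apply, c0single_apply]
        simp [hβ]
  rw [hset]
  refine core_iff (fun α => c0single α 1) c 1 one_pos ?_ ?_
  · intro F
    simpa [ENNReal.rpow_one] using c0_dual_single_tsum_ne_top F
  · intro hne
    have hc : ∀ α, c α ≠ 0 := by
      intro α h0
      apply hne
      have hterm : ((‖c α‖₊ : ℝ≥0∞)⁻¹) ^ (1:ℝ) = ⊤ := by
        rw [h0]; simp
      have hle := ENNReal.le_tsum (f := fun α => ((‖c α‖₊ : ℝ≥0∞)⁻¹) ^ (1:ℝ)) α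
      rw [hterm] at hle
      exact top_le_iff.mp hle
    have hsummable : Summable (fun α => ‖c α‖₊⁻¹) := by
      rw [← ENNReal.tsum_coe_ne_top_iff_summable]
      have hcoe : ∀ α, ((‖c α‖₊ : ℝ≥0∞)⁻¹) ^ (1:ℝ) = ((‖c α‖₊⁻¹ : ℝ≥0) : ℝ≥0∞) := by
        intro α
        rw [ENNReal.rpow_one, ← ENNReal.coe_inv (nnnorm_ne_zero_iff.mpr (hc α))]
      simpa [hcoe] using hne
    have hsummable' : Summable fun α => ‖(c α)⁻¹‖ := by
      have := NNReal.summable_coe.mpr hsummable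
      refine this.congr fun α => ?_
      push_cast [coe_nnnorm]
      rw [norm_inv]
    obtain ⟨F, hF⟩ := c0_pairing_exists (fun α => (c α)⁻¹) hsummable'
    refine ⟨F, fun α => ?_⟩
    rw [hF]
    rw [tsum_eq_single α ?_]
    · rw [ZeroAtInftyContinuousMap.smul_apply, c0single_apply, if_pos rfl, smul_eq_mul,
        mul_one, inv_mul_cancel₀ (hc α)]
    · intro β hβ
      rw [ZeroAtInftyContinuousMap.smul_apply, c0single_apply, if_neg hβ, smul_zero, mul_zero]
end Clause2

end WeakClosureAux


/-- Lemma 2.2: let `Λ` be countably infinite, `1 < p ≤ ∞`, `B_p = ℓ_p(Λ)` for `p < ∞` and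
`B_∞ = c₀(Λ)`, and `1/p + 1/q = 1`. For complex numbers `(c_α)`, zero is in the weak
closure of `{c_α • e_α : α ∈ Λ}` in `B_p` iff `∑_α |c_α|^{-q} = ∞` (with terms where
`c_α = 0` contributing `∞`). The case `p < ∞` is the first clause (with `q` the real
conjugate exponent); the case `p = ∞` (`c₀(Λ)`, `q = 1`) is the second clause, where
`c_α • e_α` is described pointwise. -/
theorem zero_mem_weakClosure_single_iff
    {Λ : Type*} [Countable Λ] [Infinite Λ] [DecidableEq Λ] [TopologicalSpace Λ] [DiscreteTopology Λ]
    (c : Λ → ℂ) (q : ℝ) :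
    (∀ (p : ℝ≥0∞) (_ : 1 < p) (_ : p ≠ ⊤) [Fact (1 ≤ p)], 1 / p.toReal + 1 / q = 1 →
      ((0 : WeakSpace ℂ (lp (fun _ : Λ => ℂ) p)) ∈
          closure {v : WeakSpace ℂ (lp (fun _ : Λ => ℂ) p) |
            ∃ α : Λ, v = toWeakSpace ℂ _ (c α • lp.single p α 1)} ↔
        ∑' α : Λ, ((‖c α‖₊ : ℝ≥0∞)⁻¹) ^ q = ⊤)) ∧
    (q = 1 →
      ((0 : WeakSpace ℂ C₀(Λ, ℂ)) ∈
          closure {v : WeakSpace ℂ C₀(Λ, ℂ) | ∃ (α : Λ) (g : C₀(Λ, ℂ)),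
            v = toWeakSpace ℂ _ g ∧ g α = c α ∧ ∀ β ≠ α, g β = 0} ↔
        ∑' α : Λ, ((‖c α‖₊ : ℝ≥0∞)⁻¹) ^ q = ⊤)) := by
  constructor
  · intro p hp1 hpt hFact hq
    exact clause1 c q p hp1 hpt hq
  · intro hq1
    subst hq1
    exact clause2 c
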